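/- arXiv:2008.00405 — 7 statements merged into one kernel-verified Lean document; each statement's English description precedes it below -/
import Mathlib

section
/- Let A be a Noetherian local ring, let φ₁,…,φ_r (r ≥ 1) be a regular sequence in A, and let N₁ and N₂ be saturated subsets of ℕ^r. Then 𝒤(N₁ ∩ N₂) = 𝒤(N₁) ∩ 𝒤(N₂), where 𝒤(N) denotes the ideal of A generated by {φ₁^{b₁}⋯φ_r^{b_r} : b ∈ N}. -/
/-- A subset `N` of `ℕ^ι` is *saturated* if it is nonempty and
`a + ℕ^ι ⊆ N` for every `a ∈ N`. -/
def Saturated {ι : Type*} (N : Set (ι → ℕ)) : Prop :=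
  N.Nonempty ∧ ∀ a ∈ N, ∀ c : ι → ℕ, a + c ∈ N

/-- `𝒤(N)`: the ideal of `A` generated by the monomials
`φ₁^{b₁} ⋯ φ_r^{b_r}` for `b ∈ N`. -/
def monIdeal {A : Type*} [CommRing A] {ι : Type*} [Fintype ι]
    (φ : ι → A) (N : Set (ι → ℕ)) : Ideal A :=
  Ideal.span {x : A | ∃ b ∈ N, x = ∏ i, φ i ^ b i}

set_option linter.unusedSectionVars false
set_option linter.unusedVariables false

namespace AutissierAux

open Finset

variable {A : Type*} [CommRing A] {ι : Type*} [Fintype ι] [DecidableEq ι]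

/-- The monomial `∏ φᵢ^{aᵢ}`. -/
def mon (φ : ι → A) (a : ι → ℕ) : A := ∏ i, φ i ^ a i

/-- The ideal generated by the monomials with exponents in `F`. -/
def mi (φ : ι → A) (F : Set (ι → ℕ)) : Ideal A := Ideal.span (mon φ '' F)

/-- The ideal generated by `φ j`, `j ∈ U`. -/
def kk (φ : ι → A) (U : Finset ι) : Ideal A := Ideal.span (φ '' ↑U)

/-- Master regularity hypothesis: each `φ i` is a nonzerodivisor modulo the ideal
generated by any subset of the other `φ j`'s. -/
def MH (φ : ι → A) : Prop :=
  ∀ (U : Finset ι) (i : ι), i ∉ U → ∀ x : A, φ i * x ∈ kk φ U → x ∈ kk φ U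

lemma mon_add (φ : ι → A) (a b : ι → ℕ) : mon φ (a + b) = mon φ a * mon φ b := by
  simp [mon, pow_add, Finset.prod_mul_distrib]

@[simp] lemma mon_zero (φ : ι → A) : mon φ 0 = 1 := by simp [mon]

lemma mi_mono (φ : ι → A) {F G : Set (ι → ℕ)} (h : F ⊆ G) : mi φ F ≤ mi φ G :=
  Ideal.span_mono (Set.image_mono h)

lemma mem_mi (φ : ι → A) {F : Set (ι → ℕ)} {a : ι → ℕ} (ha : a ∈ F) : mon φ a ∈ mi φ F :=
  Ideal.subset_span ⟨a, ha, rfl⟩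

lemma mem_mi_of_le (φ : ι → A) {F : Set (ι → ℕ)} {a c : ι → ℕ} (ha : a ∈ F) (h : a ≤ c) :
    mon φ c ∈ mi φ F := by
  have hc : c = (c - a) + a := by
    funext l; exact (Nat.sub_add_cancel (h l)).symm
  rw [hc, mon_add]
  exact Ideal.mul_mem_left _ _ (mem_mi φ ha)

lemma mi_union (φ : ι → A) (F G : Set (ι → ℕ)) : mi φ (F ∪ G) = mi φ F ⊔ mi φ G := by
  rw [mi, Set.image_union, Ideal.span_union]; rfl

@[simp] lemma mi_empty (φ : ι → A) : mi φ (∅ : Set (ι → ℕ)) = ⊥ := by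
  simp [mi]

lemma mi_insert (φ : ι → A) (a : ι → ℕ) (F : Set (ι → ℕ)) :
    mi φ (insert a F) = Ideal.span {mon φ a} ⊔ mi φ F := by
  rw [mi, Set.image_insert_eq, Ideal.span_insert]; rfl

@[simp] lemma kk_empty (φ : ι → A) : kk φ (∅ : Finset ι) = ⊥ := by simp [kk]

lemma kk_mono (φ : ι → A) {U V : Finset ι} (h : U ⊆ V) : kk φ U ≤ kk φ V :=
  Ideal.span_mono (Set.image_mono h)

lemma kk_insert (φ : ι → A) (j : ι) (U : Finset ι) :
    kk φ (insert j U) = Ideal.span {φ j} ⊔ kk φ U := by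
  rw [kk, Finset.coe_insert, Set.image_insert_eq, Ideal.span_insert]; rfl

lemma mul_mem_of_span {s : Set A} {I : Ideal A} {c : A} (h : ∀ t ∈ s, c * t ∈ I) {x : A}
    (hx : x ∈ Ideal.span s) : c * x ∈ I := by
  refine Submodule.span_induction h (by simp) (fun a b _ _ ha hb => by
      rw [mul_add]; exact add_mem ha hb)
    (fun r a _ ha => by rw [smul_eq_mul, mul_comm r a, ← mul_assoc]
                        exact Ideal.mul_mem_right r I ha) hx

lemma factor_of_span {s : Set A} {I : Ideal A} {c : A} (h : ∀ t ∈ s, ∃ u ∈ I, t = c * u) {x : A}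
    (hx : x ∈ Ideal.span s) : ∃ u ∈ I, x = c * u := by
  refine Submodule.span_induction h ⟨0, zero_mem I, by ring⟩ ?_ ?_ hx
  · rintro a b _ _ ⟨u, hu, rfl⟩ ⟨v, hv, rfl⟩
    exact ⟨u + v, add_mem hu hv, by ring⟩
  · rintro r a _ ⟨u, hu, rfl⟩
    exact ⟨r * u, Ideal.mul_mem_left _ _ hu, by rw [smul_eq_mul]; ring⟩

lemma mon_update (φ : ι → A) (a : ι → ℕ) (j : ι) (k : ℕ) :
    mon φ (Function.update a j k) = φ j ^ k * ∏ l ∈ Finset.univ \ {j}, φ l ^ a l := by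
  have : (fun x => φ x ^ Function.update a j k x) =
      Function.update (fun x => φ x ^ a x) j (φ j ^ k) := by
    funext x
    rcases eq_or_ne x j with rfl | hx
    · simp
    · simp [Function.update_of_ne hx]
  rw [mon, this]
  exact Finset.prod_update_of_mem (Finset.mem_univ j) _ _

lemma mon_single (φ : ι → A) (i : ι) : mon φ (Pi.single i 1) = φ i := by
  have : (Pi.single i 1 : ι → ℕ) = Function.update (0 : ι → ℕ) i 1 := rfl
  rw [this, mon_update]; simp

lemma pow_mul_mon_update (φ : ι → A) (a : ι → ℕ) (j : ι) (m : ℕ) :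
    φ j ^ m * mon φ (Function.update a j 0) = mon φ (Function.update a j m) := by
  rw [mon_update, mon_update, pow_zero, one_mul]


/-- Any element of `mi φ F` can be written `∑_{m ≤ M} φ_j^m z_m` where
`M = max_{a ∈ F} a j` and `z_m` lies in the monomial ideal of the `j`-truncations of
the exponents `a ∈ F` with `a j ≤ m`. -/
lemma exists_rep (φ : ι → A) (F : Finset (ι → ℕ)) (j : ι) {f : A} (hf : f ∈ mi φ ↑F) :
    ∃ z : ℕ → A,
      (∀ m, z m ∈ mi φ ↑((F.filter fun a => a j ≤ m).image fun a => Function.update a j 0)) ∧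
      f = ∑ m ∈ Finset.range (F.sup (fun a => a j) + 1), φ j ^ m * z m := by
  set M := F.sup (fun a => a j) with hM
  set G : ℕ → Finset (ι → ℕ) :=
    fun m => (F.filter fun a => a j ≤ m).image fun a => Function.update a j 0 with hG
  refine Submodule.span_induction ?_ ?_ ?_ ?_ hf
  · rintro t ⟨a, ha, rfl⟩
    replace ha : a ∈ F := ha
    refine ⟨fun m => if m = a j then mon φ (Function.update a j 0) else 0, fun m => ?_, ?_⟩
    · simp only; split_ifs with h
      · subst h
        exact mem_mi φ (Finset.mem_coe.mpr
          (Finset.mem_image.mpr ⟨a, Finset.mem_filter.mpr ⟨ha, le_refl _⟩, rfl⟩))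
      · exact zero_mem _
    · have haj : a j ∈ Finset.range (M + 1) := by
        rw [Finset.mem_range]
        exact Nat.lt_succ_of_le (Finset.le_sup (f := fun a => a j) ha)
      have : ∀ m, φ j ^ m * (if m = a j then mon φ (Function.update a j 0) else 0)
          = if m = a j then φ j ^ m * mon φ (Function.update a j 0) else 0 := by
        intro m; split_ifs <;> simp
      rw [Finset.sum_congr rfl (fun m _ => this m), Finset.sum_ite_eq' _ (a j) _, if_pos haj,
        pow_mul_mon_update, Function.update_eq_self]
  · exact ⟨0, fun m => zero_mem _, by simp⟩
  · rintro x y _ _ ⟨z₁, hz₁, rfl⟩ ⟨z₂, hz₂, rfl⟩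
    exact ⟨z₁ + z₂, fun m => add_mem (hz₁ m) (hz₂ m),
      by rw [← Finset.sum_add_distrib]; exact Finset.sum_congr rfl fun m _ => by simp; ring⟩
  · rintro r x _ ⟨z, hz, rfl⟩
    refine ⟨fun m => r * z m, fun m => Ideal.mul_mem_left _ _ (hz m), ?_⟩
    rw [smul_eq_mul, Finset.mul_sum]
    exact Finset.sum_congr rfl fun m _ => by ring

/-- Shifting a `φ_j`-adic sum. -/
lemma sum_shift (c : A) (g : ℕ → A) (M : ℕ) :
    ∑ m ∈ Finset.range (M + 2), c ^ m * g m
      = g 0 + c * ∑ m ∈ Finset.range (M + 1), c ^ m * g (m + 1) := by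
  rw [Finset.sum_range_succ' (fun m => c ^ m * g m) (M + 1)]
  rw [Finset.mul_sum]
  simp only [pow_zero, one_mul, pow_succ]
  rw [add_comm]
  congr 1
  exact Finset.sum_congr rfl fun m _ => by ring


/-- Key lemma: modulo an ideal `kk φ U` generated by some of the `φ`'s, `φ i` is a
nonzerodivisor modulo any monomial ideal in the variables of `S`, where `i ∉ S ∪ U`
and `U ∩ S = ∅`. -/
theorem lemB (φ : ι → A) (hmh : MH φ) :
    ∀ (n : ℕ) (S U : Finset ι), S.card = n → Disjoint U S → ∀ i : ι, i ∉ S → i ∉ U →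
    ∀ F : Finset (ι → ℕ), (∀ a ∈ F, ∀ l, a l ≠ 0 → l ∈ S) →
    ∀ y : A, φ i * y ∈ mi φ ↑F ⊔ kk φ U → y ∈ mi φ ↑F ⊔ kk φ U := by
  intro n
  induction n with
  | zero =>
    intro S U hcard _ i hiS hiU F hF y hy
    rw [Finset.card_eq_zero] at hcard; subst hcard
    by_cases h0 : (0 : ι → ℕ) ∈ F
    · have h1 : (1 : A) ∈ mi φ ↑F := by
        have := mem_mi φ (Finset.mem_coe.mpr h0); rwa [mon_zero] at this
      have htop : mi φ ↑F = ⊤ := (Ideal.eq_top_iff_one _).mpr h1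
      rw [htop]
      simp
    · have hF0 : F = ∅ := by
        rw [Finset.eq_empty_iff_forall_notMem]
        intro a ha
        have ha0 : a = 0 := funext fun l => by
          by_contra hl
          exact absurd (hF a ha l hl) (Finset.notMem_empty l)
        exact h0 (ha0 ▸ ha)
      subst hF0
      simp only [Finset.coe_empty, mi_empty, bot_sup_eq] at hy ⊢
      exact hmh U i hiU y hy
  | succ n IH =>
    intro S U hcard hdisj i hiS hiU F hF y hy
    obtain ⟨j, hj⟩ := Finset.card_pos.mp (show 0 < S.card by omega)
    have hcard' : (S.erase j).card = n := by
      rw [Finset.card_erase_of_mem hj, hcard]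
      omega
    have hjU : j ∉ U := Finset.disjoint_right.mp hdisj hj
    have hij : i ≠ j := fun h => hiS (h ▸ hj)
    have hiS' : i ∉ S.erase j := fun h => hiS (Finset.mem_of_mem_erase h)
    have hdisj' : Disjoint U (S.erase j) := hdisj.mono_right (Finset.erase_subset _ _)
    have hdisj'' : Disjoint (insert j U) (S.erase j) :=
      Finset.disjoint_insert_left.mpr ⟨Finset.notMem_erase _ _, hdisj'⟩
    -- the inner induction
    have C : ∀ (Mc : ℕ) (Gc : ℕ → Finset (ι → ℕ)),
        (∀ m, Gc m ⊆ Gc (m + 1)) →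
        (∀ m, ∀ a ∈ Gc m, ∀ l, a l ≠ 0 → l ∈ S.erase j) →
        ∀ (yc : A) (zc : ℕ → A), (∀ m, zc m ∈ mi φ ↑(Gc m)) →
        φ i * yc - (∑ m ∈ Finset.range (Mc + 1), φ j ^ m * zc m) ∈ kk φ U →
        ∃ w : ℕ → A, (∀ m, w m ∈ mi φ ↑(Gc m)) ∧
          yc - (∑ m ∈ Finset.range (Mc + 1), φ j ^ m * w m) ∈ kk φ U := by
      intro Mc
      induction Mc with
      | zero =>
        intro Gc _ hGsupp yc zc hzc hmem
        simp only [zero_add, Finset.sum_range_one, pow_zero, one_mul] at hmem ⊢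
        have h1 : φ i * yc ∈ mi φ ↑(Gc 0) ⊔ kk φ U :=
          Submodule.mem_sup.mpr ⟨zc 0, hzc 0, φ i * yc - zc 0, hmem, by ring⟩
        have h2 := IH (S.erase j) U hcard' hdisj' i hiS' hiU (Gc 0) (hGsupp 0) yc h1
        rw [Submodule.mem_sup] at h2
        obtain ⟨u, hu, k', hk', huk⟩ := h2
        refine ⟨fun m => if m = 0 then u else 0, fun m => ?_, ?_⟩
        · show (if m = 0 then u else 0) ∈ mi φ ↑(Gc m)
          split_ifs with h
          · subst h; exact hu
          · exact zero_mem _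
        · have h5 : yc - u = k' := by rw [← huk]; ring
          simpa [h5] using hk'
      | succ Mc ihC =>
        intro Gc hGmono hGsupp yc zc hzc hmem
        have hsplit : ∑ m ∈ Finset.range (Mc + 2), φ j ^ m * zc m
            = zc 0 + φ j * ∑ m ∈ Finset.range (Mc + 1), φ j ^ m * zc (m + 1) :=
          sum_shift (φ j) zc Mc
        set Csum := ∑ m ∈ Finset.range (Mc + 1), φ j ^ m * zc (m + 1) with hCdef
        have hjmem : φ j ∈ kk φ (insert j U) :=
          Ideal.subset_span ⟨j, by simp, rfl⟩
        have h1 : φ i * yc ∈ mi φ ↑(Gc 0) ⊔ kk φ (insert j U) := by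
          refine Submodule.mem_sup.mpr ⟨zc 0, hzc 0, φ i * yc - zc 0, ?_, by ring⟩
          have heq : φ i * yc - zc 0
              = (φ i * yc - ∑ m ∈ Finset.range (Mc + 2), φ j ^ m * zc m) + φ j * Csum := by
            rw [hsplit]; ring
          rw [heq]
          exact add_mem (kk_mono φ (Finset.subset_insert j U) hmem)
            (Ideal.mul_mem_right _ _ hjmem)
        have h2 := IH (S.erase j) (insert j U) hcard' hdisj'' i hiS'
          (by simp [Finset.mem_insert, hij, hiU]) (Gc 0) (hGsupp 0) yc h1
        rw [Submodule.mem_sup] at h2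
        obtain ⟨u, hu, d, hd, hud⟩ := h2
        rw [kk_insert, Submodule.mem_sup] at hd
        obtain ⟨e, he, k₁, hk₁, hek⟩ := hd
        obtain ⟨y', hy'⟩ := Ideal.mem_span_singleton'.mp he
        have hyeq : yc = u + k₁ + y' * φ j := by rw [← hud, ← hek, ← hy']; ring
        set v := φ i * y' - Csum with hvdef
        have hveq : φ j * v
            = (φ i * yc - ∑ m ∈ Finset.range (Mc + 2), φ j ^ m * zc m)
              + (zc 0 - φ i * u) - φ i * k₁ := by
          rw [hvdef, hsplit, hyeq]; ring
        have hvmem : φ j * v ∈ mi φ ↑(Gc 0) ⊔ kk φ U := by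
          rw [hveq]
          exact sub_mem (add_mem (Submodule.mem_sup_right hmem)
              (Submodule.mem_sup_left (sub_mem (hzc 0) (Ideal.mul_mem_left _ _ hu))))
            (Submodule.mem_sup_right (Ideal.mul_mem_left _ _ hk₁))
        have h3 := IH (S.erase j) U hcard' hdisj' j (Finset.notMem_erase _ _) hjU
          (Gc 0) (hGsupp 0) v hvmem
        rw [Submodule.mem_sup] at h3
        obtain ⟨v₀, hv₀, k₂, hk₂, hvk⟩ := h3
        set z' : ℕ → A := fun m => zc (m + 1) + if m = 0 then v₀ else 0 with hz'def
        have hz' : ∀ m, z' m ∈ mi φ ↑(Gc (m + 1)) := by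
          intro m
          refine add_mem (hzc (m + 1)) ?_
          split_ifs with h
          · subst h; exact mi_mono φ (by exact_mod_cast hGmono 0) hv₀
          · exact zero_mem _
        have hsum' : φ i * y' - ∑ m ∈ Finset.range (Mc + 1), φ j ^ m * z' m ∈ kk φ U := by
          have hss : ∑ m ∈ Finset.range (Mc + 1), φ j ^ m * z' m = Csum + v₀ := by
            have hterm : ∀ m, φ j ^ m * z' m
                = φ j ^ m * zc (m + 1) + (if m = 0 then φ j ^ m * v₀ else 0) := by
              intro m
              show φ j ^ m * (zc (m + 1) + if m = 0 then v₀ else 0) = _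
              split_ifs <;> ring
            rw [Finset.sum_congr rfl fun m _ => hterm m, Finset.sum_add_distrib,
              Finset.sum_ite_eq' _ 0 _, if_pos (Finset.mem_range.mpr (Nat.succ_pos Mc))]
            rw [hCdef]
            simp
          rw [hss]
          have h4 := hvk
          rw [hvdef] at h4
          have heq2 : φ i * y' - (Csum + v₀) = k₂ := by linear_combination -h4
          rw [heq2]; exact hk₂
        obtain ⟨w', hw', hw'k⟩ := ihC (fun m => Gc (m + 1)) (fun m => hGmono (m + 1))
          (fun m => hGsupp (m + 1)) y' z' hz' hsum'
        refine ⟨fun m => Nat.casesOn m u (fun m' => w' m'), fun m => ?_, ?_⟩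
        · cases m with
          | zero => exact hu
          | succ m' => exact hw' m'
        · have hw0 : (∑ m ∈ Finset.range (Mc + 2),
              φ j ^ m * (Nat.casesOn m u (fun m' => w' m') : A))
              = u + φ j * ∑ m ∈ Finset.range (Mc + 1), φ j ^ m * w' m :=
            sum_shift (φ j) _ Mc
          rw [hw0]
          have heq3 : yc - (u + φ j * ∑ m ∈ Finset.range (Mc + 1), φ j ^ m * w' m)
              = k₁ + φ j * (y' - ∑ m ∈ Finset.range (Mc + 1), φ j ^ m * w' m) := by
            rw [hyeq]; ring
          rw [heq3]
          exact add_mem hk₁ (Ideal.mul_mem_left _ _ hw'k)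
    -- back to the main argument
    rw [Submodule.mem_sup] at hy
    obtain ⟨f, hf, k, hk, hfk⟩ := hy
    obtain ⟨z, hz, hzf⟩ := exists_rep φ F j hf
    set M := F.sup (fun a => a j) with hMdef
    set G : ℕ → Finset (ι → ℕ) :=
      fun m => (F.filter fun a => a j ≤ m).image fun a => Function.update a j 0 with hGdef
    have hGmono : ∀ m, G m ⊆ G (m + 1) := by
      intro m x hx
      obtain ⟨a, ha, rfl⟩ := Finset.mem_image.mp hx
      exact Finset.mem_image.mpr ⟨a, Finset.mem_filter.mpr ⟨(Finset.mem_filter.mp ha).1,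
        le_trans (Finset.mem_filter.mp ha).2 (Nat.le_succ m)⟩, rfl⟩
    have hGsupp : ∀ m, ∀ b ∈ G m, ∀ l, b l ≠ 0 → l ∈ S.erase j := by
      intro m b hb l hl
      obtain ⟨a, ha, rfl⟩ := Finset.mem_image.mp hb
      have hlj : l ≠ j := by
        intro h; subst h; simp at hl
      rw [Finset.mem_erase]
      refine ⟨hlj, hF a (Finset.mem_filter.mp ha).1 l ?_⟩
      rwa [Function.update_of_ne hlj] at hl
    have hmem0 : φ i * y - ∑ m ∈ Finset.range (M + 1), φ j ^ m * z m ∈ kk φ U := by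
      have heq : φ i * y - ∑ m ∈ Finset.range (M + 1), φ j ^ m * z m = k := by
        rw [← hzf, ← hfk]; ring
      rw [heq]; exact hk
    obtain ⟨w, hw, hwk⟩ := C M G hGmono hGsupp y z hz hmem0
    have hterm : ∀ m, φ j ^ m * w m ∈ mi φ ↑F := by
      intro m
      refine mul_mem_of_span (c := φ j ^ m) ?_ (hw m)
      rintro t ⟨b, hb, rfl⟩
      obtain ⟨a, ha, rfl⟩ := Finset.mem_image.mp (Finset.mem_coe.mp hb)
      rw [pow_mul_mon_update]
      refine mem_mi_of_le φ (Finset.mem_coe.mpr (Finset.mem_filter.mp ha).1) ?_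
      intro l
      rcases eq_or_ne l j with rfl | hlj
      · rw [Function.update_self]; exact (Finset.mem_filter.mp ha).2
      · rw [Function.update_of_ne hlj]
    exact Submodule.mem_sup.mpr ⟨∑ m ∈ Finset.range (M + 1), φ j ^ m * w m,
      sum_mem (fun m _ => hterm m), y - ∑ m ∈ Finset.range (M + 1), φ j ^ m * w m, hwk,
      by ring⟩


/-- Colon lemma, single-variable case. -/
lemma lemL1single (φ : ι → A) (hmh : MH φ) (F : Finset (ι → ℕ)) (i : ι) (x : A)
    (h : φ i * x ∈ mi φ ↑F) :
    x ∈ mi φ ↑(F.image fun a => a - Pi.single i 1) := by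
  classical
  set e : ι → ℕ := Pi.single i 1 with hedef
  set F₀ := F.filter (fun a => a i = 0) with hF₀
  set F₁ := F.filter (fun a => ¬ a i = 0) with hF₁
  have hsplit : mi φ ↑F = mi φ ↑F₀ ⊔ mi φ ↑F₁ := by
    rw [← mi_union, ← Finset.coe_union, Finset.filter_union_filter_not_eq]
  rw [hsplit, Submodule.mem_sup] at h
  obtain ⟨f₀, hf₀, f₁, hf₁, hsum⟩ := h
  -- factor φ i out of f₁
  have hfac : ∃ u ∈ mi φ ↑(F₁.image fun a => a - e), f₁ = φ i * u := by
    refine factor_of_span ?_ hf₁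
    rintro t ⟨a, ha, rfl⟩
    obtain ⟨ha1, ha2⟩ := Finset.mem_filter.mp (Finset.mem_coe.mp ha)
    have hle : e ≤ a := by
      intro l
      rcases eq_or_ne l i with rfl | hl
      · simpa [hedef] using Nat.one_le_iff_ne_zero.mpr ha2
      · simp [hedef, Pi.single_eq_of_ne hl]
    refine ⟨mon φ (a - e), mem_mi φ (Finset.mem_coe.mpr
      (Finset.mem_image.mpr ⟨a, Finset.mem_filter.mpr ⟨ha1, ha2⟩, rfl⟩)), ?_⟩
    have hae : a = (a - e) + e := by
      funext l; exact (Nat.sub_add_cancel (hle l)).symm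
    calc mon φ a = mon φ ((a - e) + e) := by rw [← hae]
    _ = mon φ (a - e) * mon φ e := mon_add φ _ _
    _ = φ i * mon φ (a - e) := by rw [hedef, mon_single]; ring
  obtain ⟨u, hu, hf₁u⟩ := hfac
  have hxu : φ i * (x - u) ∈ mi φ ↑F₀ := by
    have heq : φ i * (x - u) = f₀ := by rw [mul_sub, ← hsum, hf₁u]; ring
    rw [heq]; exact hf₀
  have hB := lemB φ hmh (Finset.univ.erase i).card (Finset.univ.erase i) ∅ rfl
    (Finset.disjoint_left.mpr (by simp)) i (Finset.notMem_erase _ _) (Finset.notMem_empty _)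
    F₀ ?_ (x - u) ?_
  rotate_left
  · intro a ha l hl
    obtain ⟨_, ha2⟩ := Finset.mem_filter.mp ha
    refine Finset.mem_erase.mpr ⟨?_, Finset.mem_univ l⟩
    intro hli; subst hli; exact hl ha2
  · rw [kk_empty, sup_bot_eq]; exact hxu
  rw [kk_empty, sup_bot_eq] at hB
  have hx : x = (x - u) + u := by ring
  rw [hx]
  refine add_mem (mi_mono φ ?_ hB) (mi_mono φ ?_ hu)
  · intro a ha
    obtain ⟨ha1, ha2⟩ := Finset.mem_filter.mp (Finset.mem_coe.mp ha)
    refine Finset.mem_coe.mpr (Finset.mem_image.mpr ⟨a, ha1, ?_⟩)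
    funext l
    rcases eq_or_ne l i with rfl | hl
    · simp [hedef, ha2]
    · simp [hedef, Pi.single_eq_of_ne hl]
  · exact_mod_cast Finset.image_subset_image (Finset.filter_subset _ F)

/-- Colon lemma: if `x·φ^b ∈ mi F` then `x ∈ mi (F ∸ b)`. -/
lemma lemL1 (φ : ι → A) (hmh : MH φ) :
    ∀ (d : ℕ) (b : ι → ℕ), (∑ l, b l) = d → ∀ (F : Finset (ι → ℕ)) (x : A),
    x * mon φ b ∈ mi φ ↑F → x ∈ mi φ ↑(F.image fun a => a - b) := by
  intro d
  induction d with
  | zero =>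
    intro b hb F x hx
    have hb0 : b = 0 := funext fun l => by
      have := Finset.sum_eq_zero_iff.mp hb l (Finset.mem_univ l); exact this
    subst hb0
    rw [mon_zero, mul_one] at hx
    have himg : F.image (fun a => a - (0 : ι → ℕ)) = F := by
      rw [show (fun a : ι → ℕ => a - 0) = id from funext fun a => tsub_zero a, Finset.image_id]
    rw [himg]; exact hx
  | succ d ih =>
    intro b hb F x hx
    have hbne : ∃ i, b i ≠ 0 := by
      by_contra h
      push_neg at h
      rw [Finset.sum_eq_zero (fun l _ => h l)] at hb
      omega
    obtain ⟨i, hi⟩ := hbne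
    set e : ι → ℕ := Pi.single i 1 with hedef
    have hle : e ≤ b := by
      intro l
      rcases eq_or_ne l i with rfl | hl
      · simpa [hedef] using Nat.one_le_iff_ne_zero.mpr hi
      · simp [hedef, Pi.single_eq_of_ne hl]
    set b' := b - e with hb'def
    have hb'e : b' + e = b := by
      funext l; exact Nat.sub_add_cancel (hle l)
    have hd' : (∑ l, b' l) = d := by
      have h1 : (∑ l, b' l) + (∑ l, e l) = ∑ l, b l := by
        rw [← Finset.sum_add_distrib]
        exact Finset.sum_congr rfl fun l _ => congrFun hb'e l
      have h2 : (∑ l, e l) = 1 := by simp [hedef]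
      omega
    have hmon : mon φ b = mon φ b' * φ i := by
      rw [← hb'e, mon_add, mon_single]
    have hx1 : φ i * (x * mon φ b') ∈ mi φ ↑F := by
      have : φ i * (x * mon φ b') = x * mon φ b := by rw [hmon]; ring
      rw [this]; exact hx
    have hx2 := lemL1single φ hmh F i (x * mon φ b') hx1
    have hx3 := ih b' hd' (F.image fun a => a - e) x hx2
    have hfun : ((fun a : ι → ℕ => a - b') ∘ (fun a => a - e)) = fun a => a - b := by
      funext a; funext l
      have hbl : b' l + e l = b l := congrFun hb'e l
      show a l - e l - b' l = a l - b l
      omega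
    have himg : (F.image (fun a => a - e)).image (fun a => a - b') = F.image (fun a => a - b) := by
      rw [Finset.image_image, hfun]
    rw [himg] at hx3
    exact hx3


lemma monIdeal_mono (φ : ι → A) {N N' : Set (ι → ℕ)} (h : N ⊆ N') :
    monIdeal φ N ≤ monIdeal φ N' :=
  Ideal.span_mono (fun x => by rintro ⟨b, hb, rfl⟩; exact ⟨b, h hb, rfl⟩)

lemma extract (φ : ι → A) (N : Set (ι → ℕ)) {x : A} (hx : x ∈ monIdeal φ N) :
    ∃ F : Finset (ι → ℕ), ↑F ⊆ N ∧ x ∈ mi φ ↑F := by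
  have hEq : monIdeal φ N = mi φ N := by
    unfold monIdeal mi
    congr 1
    ext t
    constructor
    · rintro ⟨b, hb, rfl⟩; exact ⟨b, hb, rfl⟩
    · rintro ⟨b, hb, rfl⟩; exact ⟨b, hb, rfl⟩
  rw [hEq] at hx
  refine Submodule.span_induction ?_ ?_ ?_ ?_ hx
  · rintro t ⟨b, hb, rfl⟩
    exact ⟨{b}, by simpa using hb, mem_mi φ (by simp)⟩
  · exact ⟨∅, by simp, by simp⟩
  · rintro a b _ _ ⟨F₁, hF₁, ha⟩ ⟨F₂, hF₂, hb⟩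
    refine ⟨F₁ ∪ F₂, by rw [Finset.coe_union]; exact Set.union_subset hF₁ hF₂,
      add_mem (mi_mono φ (by rw [Finset.coe_union]; exact Set.subset_union_left) ha)
        (mi_mono φ (by rw [Finset.coe_union]; exact Set.subset_union_right) hb)⟩
  · rintro r a _ ⟨F₁, hF₁, ha⟩
    exact ⟨F₁, hF₁, Submodule.smul_mem _ r ha⟩

lemma up_mem {N : Set (ι → ℕ)} (h : ∀ a ∈ N, ∀ c : ι → ℕ, a + c ∈ N) {a c : ι → ℕ}
    (ha : a ∈ N) (hac : a ≤ c) : c ∈ N := by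
  have h2 := h a ha (c - a)
  rwa [show a + (c - a) = c from funext fun l => by
    have h3 : a l ≤ c l := hac l
    show a l + (c l - a l) = c l
    omega] at h2

lemma add_tsub_eq_sup (a g : ι → ℕ) : a + (g - a) = g ⊔ a := by
  funext l
  show a l + (g l - a l) = (g ⊔ a) l
  have h1 : (g ⊔ a) l = g l ⊔ a l := rfl
  rw [h1]
  rcases le_total (g l) (a l) with h | h
  · rw [sup_eq_right.mpr h]; omega
  · rw [sup_eq_left.mpr h]; omega

lemma lemD (φ : ι → A) (hmh : MH φ) (N₁ N₂ : Set (ι → ℕ))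
    (h₁ : ∀ a ∈ N₁, ∀ c : ι → ℕ, a + c ∈ N₁) (h₂ : ∀ a ∈ N₂, ∀ c : ι → ℕ, a + c ∈ N₂) :
    ∀ (n : ℕ) (F : Finset (ι → ℕ)), F.card = n → ↑F ⊆ N₁ → ∀ x : A,
    x ∈ mi φ ↑F → x ∈ monIdeal φ N₂ → x ∈ monIdeal φ (N₁ ∩ N₂) := by
  intro n
  induction n with
  | zero =>
    intro F hcard _ x hx _
    rw [Finset.card_eq_zero] at hcard; subst hcard
    simp only [Finset.coe_empty, mi_empty, Ideal.mem_bot] at hx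
    rw [hx]; exact zero_mem _
  | succ n ih =>
    intro F hcard hFN₁ x hx hx₂
    obtain ⟨a, ha⟩ := Finset.card_pos.mp (show 0 < F.card by omega)
    have hx' : x ∈ Ideal.span {mon φ a} ⊔ mi φ ↑(F.erase a) := by
      rw [← mi_insert]
      have hins : (insert a ↑(F.erase a) : Set (ι → ℕ)) = ↑F := by
        rw [← Finset.coe_insert, Finset.insert_erase ha]
      rw [hins]; exact hx
    rw [Submodule.mem_sup] at hx'
    obtain ⟨c, hc, g, hg, hcg⟩ := hx'
    obtain ⟨c', hc'⟩ := Ideal.mem_span_singleton'.mp hc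
    obtain ⟨F₂, hF₂N, hxF₂⟩ := extract φ N₂ hx₂
    have hcc : c' * mon φ a ∈ mi φ ↑(F₂ ∪ F.erase a) := by
      have heq : c' * mon φ a = x - g := by rw [← hcg, hc']; ring
      rw [heq]
      exact sub_mem
        (mi_mono φ (by rw [Finset.coe_union]; exact Set.subset_union_left) hxF₂)
        (mi_mono φ (by rw [Finset.coe_union]; exact Set.subset_union_right) hg)
    have hcol := lemL1 φ hmh (∑ l, a l) a rfl (F₂ ∪ F.erase a) c' hcc
    have hkey : ∀ t ∈ (mon φ '' ↑((F₂ ∪ F.erase a).image fun gg => gg - a)),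
        mon φ a * t ∈ monIdeal φ (N₁ ∩ N₂) ⊔ mi φ ↑(F.erase a) := by
      rintro t ⟨bb, hbb, rfl⟩
      obtain ⟨gg, hgg, rfl⟩ := Finset.mem_image.mp (Finset.mem_coe.mp hbb)
      have hmm : mon φ a * mon φ (gg - a) = mon φ (gg ⊔ a) := by
        rw [← mon_add, add_tsub_eq_sup]
      rw [hmm]
      rcases Finset.mem_union.mp hgg with hgg2 | hgg1
      · refine Submodule.mem_sup_left (Ideal.subset_span ⟨gg ⊔ a, ⟨?_, ?_⟩, rfl⟩)
        · exact up_mem h₁ (hFN₁ (Finset.mem_coe.mpr ha)) le_sup_right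
        · exact up_mem h₂ (hF₂N (Finset.mem_coe.mpr hgg2)) le_sup_left
      · exact Submodule.mem_sup_right (mem_mi_of_le φ (Finset.mem_coe.mpr hgg1) le_sup_left)
    have hcmem : c' * mon φ a ∈ monIdeal φ (N₁ ∩ N₂) ⊔ mi φ ↑(F.erase a) := by
      have h5 := mul_mem_of_span hkey hcol
      rwa [mul_comm] at h5
    rw [Submodule.mem_sup] at hcmem
    obtain ⟨p, hp, q, hq, hpq⟩ := hcmem
    have hqg : q + g ∈ mi φ ↑(F.erase a) := add_mem hq hg
    have hqgN₂ : q + g ∈ monIdeal φ N₂ := by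
      have heq : q + g = x - p := by rw [← hcg, ← hc', ← hpq]; ring
      rw [heq]
      exact sub_mem hx₂ (monIdeal_mono φ Set.inter_subset_right hp)
    have hih := ih (F.erase a) (by rw [Finset.card_erase_of_mem ha, hcard]; omega)
      (fun b hb => hFN₁ (Finset.coe_subset.mpr (Finset.erase_subset a F) hb))
      (q + g) hqg hqgN₂
    have hxeq : x = p + (q + g) := by rw [← hcg, ← hc', ← hpq]; ring
    rw [hxeq]
    exact add_mem hp hih

open RingTheory.Sequence in
lemma mh_of_reg {A : Type*} [CommRing A] [IsNoetherianRing A] [IsLocalRing A]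
    {r : ℕ} (φ : Fin r → A) (hreg : RingTheory.Sequence.IsRegular A (List.ofFn φ)) :
    MH φ := by
  intro U i hiU x hx
  classical
  set l₂ : List (Fin r) := ((insert i U)ᶜ).toList with hl₂
  have hperm : (List.ofFn φ).Perm (U.toList.map φ ++ φ i :: l₂.map φ) := by
    rw [List.ofFn_eq_map]
    have hp : (List.finRange r).Perm (U.toList ++ i :: l₂) := by
      apply Multiset.coe_eq_coe.mp
      show ((List.finRange r : List (Fin r)) : Multiset (Fin r)) = ↑(U.toList ++ i :: l₂)
      have h1 : ((List.finRange r : List (Fin r)) : Multiset (Fin r)) = Finset.univ.val := by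
        simp [Finset.univ, Fintype.elems]
      have h2 : ((U.toList ++ i :: l₂ : List (Fin r)) : Multiset (Fin r))
          = U.val + (i ::ₘ ((insert i U)ᶜ).val) := by
        rw [show ((U.toList ++ i :: l₂ : List (Fin r)) : Multiset (Fin r))
            = (U.toList : Multiset (Fin r)) + (i ::ₘ (l₂ : Multiset (Fin r))) from by
          rw [← Multiset.coe_add, Multiset.cons_coe]]
        rw [Finset.coe_toList, hl₂, Finset.coe_toList]
      rw [h1, h2]
      have h3 : U.val + (i ::ₘ ((insert i U)ᶜ).val)
          = (insert i U).val + ((insert i U)ᶜ).val := by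
        rw [Finset.insert_val_of_notMem hiU]
        simp [Multiset.add_cons, Multiset.cons_add]
      rw [h3, Finset.compl_eq_univ_sdiff, Finset.sdiff_val, add_tsub_cancel_of_le]
      exact Finset.val_le_iff.mpr (Finset.subset_univ _)
    have hmapped := hp.map φ
    rw [List.map_append, List.map_cons] at hmapped
    exact hmapped
  have hreg' := IsLocalRing.isRegular_of_perm hreg hperm
  have hw := hreg'.toIsWeaklyRegular
  rw [show U.toList.map φ ++ φ i :: l₂.map φ = (U.toList.map φ ++ [φ i]) ++ l₂.map φ by simp] at hw
  rw [isWeaklyRegular_append_iff] at hw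
  have hw1 := hw.1
  rw [isWeaklyRegular_append_iff] at hw1
  have hw2 := hw1.2
  rw [isWeaklyRegular_singleton_iff] at hw2
  have hset : {a : A | a ∈ List.map φ U.toList} = φ '' ↑U := by
    ext t
    simp only [Set.mem_setOf_eq, List.mem_map, Finset.mem_toList, Set.mem_image, Finset.mem_coe]
  have hIeq : (Ideal.ofList (U.toList.map φ) • ⊤ : Submodule A A) = kk φ U := by
    rw [smul_eq_mul, Ideal.mul_top]
    show Ideal.span {a : A | a ∈ List.map φ U.toList} = _
    rw [hset]
    rfl
  rw [hIeq] at hw2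
  have h4 : φ i • (Submodule.Quotient.mk x : A ⧸ (kk φ U : Submodule A A)) = φ i • 0 := by
    rw [smul_zero, ← Submodule.Quotient.mk_smul, Submodule.Quotient.mk_eq_zero]
    rwa [smul_eq_mul]
  have h5 := hw2 h4
  rwa [Submodule.Quotient.mk_eq_zero] at h5

end AutissierAux

/-- Autissier's Lemme 3.3: if `φ₁, …, φ_r` is a regular sequence in a
Noetherian local ring `A` and `N₁`, `N₂` are saturated subsets of `ℕ^r`, then
`𝒤(N₁ ∩ N₂) = 𝒤(N₁) ∩ 𝒤(N₂)`. -/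
theorem monIdeal_inter {A : Type*} [CommRing A] [IsNoetherianRing A] [IsLocalRing A]
    {r : ℕ} (hr : 1 ≤ r) (φ : Fin r → A)
    (hreg : RingTheory.Sequence.IsRegular A (List.ofFn φ))
    (N₁ N₂ : Set (Fin r → ℕ)) (h₁ : Saturated N₁) (h₂ : Saturated N₂) :
    monIdeal φ (N₁ ∩ N₂) = monIdeal φ N₁ ⊓ monIdeal φ N₂ := by

  classical
  have hmh : AutissierAux.MH φ := AutissierAux.mh_of_reg φ hreg
  refine le_antisymm (le_inf (AutissierAux.monIdeal_mono φ Set.inter_subset_left)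
    (AutissierAux.monIdeal_mono φ Set.inter_subset_right)) ?_
  intro x hx
  rw [Submodule.mem_inf] at hx
  obtain ⟨hx₁, hx₂⟩ := hx
  obtain ⟨F, hFN, hxF⟩ := AutissierAux.extract φ N₁ hx₁
  exact AutissierAux.lemD φ hmh N₁ N₂ h₁.2 h₂.2 F.card F rfl hFN x hxF hx₂
end

section
/- Let q ≥ 1, for each i = 1,…,q let M_i be a saturated subset of ℕ^{r_i} with r_i ≥ 1, and let N be a saturated subset of ℕ^q. Then the set M(N) = ⋃_{c ∈ N} c₁M₁ × ⋯ × c_qM_q is a saturated subset of ℕ^r, where r = r₁ + ⋯ + r_q. -/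
/-- `cM`: equal to `ℕ^ι` when `c = 0`, and to the `c`-fold Minkowski sum
`{b₁ + ⋯ + b_c : b₁, …, b_c ∈ M}` when `c > 0`. -/
def minkSum {ι : Type*} (c : ℕ) (M : Set (ι → ℕ)) : Set (ι → ℕ) :=
  if c = 0 then Set.univ
  else {b | ∃ f : Fin c → (ι → ℕ), (∀ i, f i ∈ M) ∧ b = ∑ i, f i}

/-- `M(N) = ⋃_{c ∈ N} c₁M₁ × ⋯ × c_qM_q`, regarded as a subset of
`ℕ^{r₁+⋯+r_q}` by identifying `ℕ^{r₁} × ⋯ × ℕ^{r_q}` with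
`ℕ^{(i : Fin q) × Fin (r i)}`. -/
def MsetOf {q : ℕ} {r : Fin q → ℕ} (M : ∀ i, Set (Fin (r i) → ℕ))
    (N : Set (Fin q → ℕ)) : Set (((i : Fin q) × Fin (r i)) → ℕ) :=
  {a | ∃ c ∈ N, ∀ i : Fin q, (fun j => a ⟨i, j⟩) ∈ minkSum (c i) (M i)}

lemma minkSum_add_mem {ι : Type*} {M : Set (ι → ℕ)} (hM : Saturated M)
    {c : ℕ} {b : ι → ℕ} (hb : b ∈ minkSum c M) (d : ι → ℕ) :
    b + d ∈ minkSum c M := by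
  by_cases h : c = 0
  · simp [minkSum, h]
  · simp only [minkSum, if_neg h, Set.mem_setOf_eq] at hb ⊢
    obtain ⟨f, hf, rfl⟩ := hb
    have hc : 0 < c := Nat.pos_of_ne_zero h
    refine ⟨Function.update f ⟨0, hc⟩ (f ⟨0, hc⟩ + d), fun i => ?_, ?_⟩
    · by_cases hi : i = ⟨0, hc⟩
      · subst hi; rw [Function.update_self]; exact hM.2 _ (hf _) d
      · rw [Function.update_of_ne hi]; exact hf i
    · rw [Finset.sum_update_of_mem (Finset.mem_univ _),
        ← Finset.add_sum_erase _ f (Finset.mem_univ ⟨0, hc⟩),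
        Finset.sdiff_singleton_eq_erase]
      abel

/-- Definition 2.7: if each `M_i ⊆ ℕ^{r_i}` is saturated (`r_i ≥ 1`) and
`N ⊆ ℕ^q` is saturated (`q ≥ 1`), then `M(N)` is a saturated subset of
`ℕ^{r₁+⋯+r_q}`. -/
theorem MsetOf_saturated {q : ℕ} (hq : 1 ≤ q) {r : Fin q → ℕ}
    (hr : ∀ i, 1 ≤ r i) (M : ∀ i, Set (Fin (r i) → ℕ))
    (hM : ∀ i, Saturated (M i)) (N : Set (Fin q → ℕ)) (hN : Saturated N) :
    Saturated (MsetOf M N) := by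
  obtain ⟨c₀, hc₀⟩ := hN.1
  choose m hm using fun i => (hM i).1
  constructor
  · refine ⟨fun p => c₀ p.1 * m p.1 p.2, c₀, hc₀, fun i => ?_⟩
    by_cases h : c₀ i = 0
    · simp [minkSum, h]
    · refine Set.mem_setOf_eq ▸ (if_neg h ▸ ⟨fun _ => m i, fun _ => hm i, ?_⟩)
      funext j
      simp [Finset.sum_const, mul_comm]
  · rintro a ⟨c, hc, ha⟩ d
    refine ⟨c, hc, fun i => minkSum_add_mem (hM i) (ha i) _⟩
end

section
/- Let q ≥ 1, for each i = 1,…,q let M_i be a saturated subset of ℕ^{r_i} (r_i ≥ 1), and let N and N' be saturated subsets of ℕ^q. Then M(N ∩ N') = M(N) ∩ M(N'), where M(N) = ⋃_{c ∈ N} c₁M₁ × ⋯ × c_qM_q ⊆ ℕ^{r₁+⋯+r_q}. -/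
/-- Equation (2.13.1): for saturated `M_i ⊆ ℕ^{r_i}` and saturated
`N, N' ⊆ ℕ^q`, one has `M(N ∩ N') = M(N) ∩ M(N')`. -/
theorem MsetOf_inter {q : ℕ} (hq : 1 ≤ q) {r : Fin q → ℕ}
    (hr : ∀ i, 1 ≤ r i) (M : ∀ i, Set (Fin (r i) → ℕ))
    (hM : ∀ i, Saturated (M i)) (N N' : Set (Fin q → ℕ))
    (hN : Saturated N) (hN' : Saturated N') :
    MsetOf M (N ∩ N') = MsetOf M N ∩ MsetOf M N' := by
  ext a
  constructor
  · rintro ⟨c, ⟨hc, hc'⟩, h⟩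
    exact ⟨⟨c, hc, h⟩, ⟨c, hc', h⟩⟩
  · rintro ⟨⟨c, hc, h⟩, ⟨c', hc', h'⟩⟩
    refine ⟨fun i => max (c i) (c' i), ⟨?_, ?_⟩, ?_⟩
    · have := hN.2 c hc (fun i => max (c i) (c' i) - c i)
      convert this using 1
      funext i
      simp [Pi.add_apply]
    · have := hN'.2 c' hc' (fun i => max (c i) (c' i) - c' i)
      convert this using 1
      funext i
      simp [Pi.add_apply]
    · intro i
      rcases le_total (c i) (c' i) with hle | hle
      · simpa [Nat.max_eq_right hle] using h' i
      · simpa [Nat.max_eq_left hle] using h i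
end

section
/- Let A be a commutative ring and let I₁,…,I_q (q ≥ 1) be ideals of A that have the Autissier property. Then 𝒥(N(t,x)) ∩ 𝒥(N(u,y)) ⊆ 𝒥(N(λt + (1−λ)u, λx + (1−λ)y)) for all t, u ∈ ℝ_{≥0}^q ∖ {0}, all x, y ∈ ℝ_{≥0}, and all λ ∈ [0,1]. -/
/-- `𝒥(N) = Σ_{b ∈ N} I₁^{b₁} ⋯ I_q^{b_q}`. -/
def Jideal {A : Type*} [CommRing A] {q : ℕ} (I : Fin q → Ideal A)
    (N : Set (Fin q → ℕ)) : Ideal A :=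
  ⨆ b ∈ N, ∏ i, I i ^ b i

/-- Definition 2.12: the ideals `I₁, …, I_q` have the *Autissier property*
if `𝒥(N ∩ N') = 𝒥(N) ∩ 𝒥(N')` for all saturated subsets `N, N'` of `ℕ^q`. -/
def AutissierProperty {A : Type*} [CommRing A] {q : ℕ}
    (I : Fin q → Ideal A) : Prop :=
  ∀ N N' : Set (Fin q → ℕ), Saturated N → Saturated N' →
    Jideal I (N ∩ N') = Jideal I N ⊓ Jideal I N'

/-- `N(t,x) = {b ∈ ℕ^q : t₁b₁ + ⋯ + t_qb_q ≥ x}`. -/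
def Nset {q : ℕ} (t : Fin q → ℝ) (x : ℝ) : Set (Fin q → ℕ) :=
  {b | x ≤ ∑ i, t i * (b i : ℝ)}

lemma Jideal_mono {A : Type*} [CommRing A] {q : ℕ} (I : Fin q → Ideal A)
    {N N' : Set (Fin q → ℕ)} (h : N ⊆ N') : Jideal I N ≤ Jideal I N' := by
  apply iSup_le; intro b; apply iSup_le; intro hb
  exact le_iSup_of_le b (le_iSup_of_le (h hb) le_rfl)

lemma Saturated_Nset {q : ℕ} {t : Fin q → ℝ} {x : ℝ} (ht : ∀ i, 0 ≤ t i)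
    (ht0 : t ≠ 0) (hx : 0 ≤ x) : Saturated (Nset t x) := by
  constructor
  · obtain ⟨i, hi⟩ := Function.ne_iff.mp ht0
    have hti : 0 < t i := lt_of_le_of_ne (ht i) (Ne.symm hi)
    refine ⟨fun _ => ⌈x / t i⌉₊, ?_⟩
    have h1 : x / t i ≤ (⌈x / t i⌉₊ : ℝ) := Nat.le_ceil _
    have h2 : x ≤ t i * (⌈x / t i⌉₊ : ℝ) := by
      rw [div_le_iff₀ hti] at h1; linarith [h1]
    calc x ≤ t i * (⌈x / t i⌉₊ : ℝ) := h2
      _ ≤ ∑ j, t j * ((⌈x / t i⌉₊ : ℕ) : ℝ) := by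
          apply Finset.single_le_sum (f := fun j => t j * ((⌈x / t i⌉₊ : ℕ) : ℝ))
          · intro j _; exact mul_nonneg (ht j) (Nat.cast_nonneg _)
          · exact Finset.mem_univ i
  · intro a ha c
    have : ∀ j, t j * ((a j : ℝ)) ≤ t j * (((a + c) j : ℝ)) := by
      intro j
      apply mul_le_mul_of_nonneg_left _ (ht j)
      simp [Pi.add_apply]
    calc x ≤ ∑ j, t j * (a j : ℝ) := ha
      _ ≤ ∑ j, t j * (((a + c) j : ℝ)) := Finset.sum_le_sum fun j _ => this j

/-- Proposition 2.14: if `I₁, …, I_q` have the Autissier property, then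
`𝒥(N(t,x)) ∩ 𝒥(N(u,y)) ⊆ 𝒥(N(λt + (1−λ)u, λx + (1−λ)y))` for all
`t, u ∈ ℝ_{≥0}^q ∖ {0}`, all `x, y ∈ ℝ_{≥0}`, and all `λ ∈ [0,1]`. -/
theorem Jideal_Nset_inter_le {A : Type*} [CommRing A] {q : ℕ} (hq : 1 ≤ q)
    (I : Fin q → Ideal A) (hI : AutissierProperty I)
    (t u : Fin q → ℝ) (ht : ∀ i, 0 ≤ t i) (ht0 : t ≠ 0)
    (hu : ∀ i, 0 ≤ u i) (hu0 : u ≠ 0)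
    (x y : ℝ) (hx : 0 ≤ x) (hy : 0 ≤ y)
    (lam : ℝ) (hlam : lam ∈ Set.Icc (0:ℝ) 1) :
    Jideal I (Nset t x) ⊓ Jideal I (Nset u y) ≤
      Jideal I (Nset (lam • t + (1 - lam) • u) (lam * x + (1 - lam) * y)) := by
  obtain ⟨hl0, hl1⟩ := hlam
  rw [← hI _ _ (Saturated_Nset ht ht0 hx) (Saturated_Nset hu hu0 hy)]
  apply Jideal_mono
  rintro b ⟨hbt, hbu⟩
  simp only [Nset, Set.mem_setOf_eq] at hbt hbu ⊢
  have h1 : lam * x ≤ lam * ∑ i, t i * (b i : ℝ) := mul_le_mul_of_nonneg_left hbt hl0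
  have h2 : (1 - lam) * y ≤ (1 - lam) * ∑ i, u i * (b i : ℝ) :=
    mul_le_mul_of_nonneg_left hbu (by linarith)
  calc lam * x + (1 - lam) * y
      ≤ lam * ∑ i, t i * (b i : ℝ) + (1 - lam) * ∑ i, u i * (b i : ℝ) := by linarith
    _ = ∑ i, (lam • t + (1 - lam) • u) i * (b i : ℝ) := by
        rw [Finset.mul_sum, Finset.mul_sum, ← Finset.sum_add_distrib]
        apply Finset.sum_congr rfl
        intro i _
        simp [Pi.add_apply, Pi.smul_apply, smul_eq_mul]
        ring
end

section
/- Let 0 < r ≤ n be integers, and for all N ∈ ℕ let f_{n,r}(N) = Σ_{m=1}^N Σ_{ℓ=0}^{m−1} C(N−ℓ+n−r, n−r)·C(ℓ+r−1, r−1). Then f_{n,r}(N) = (n−r+1)·N^{n+1}/(n+1)! + O(N^n) as N → ∞; that is, there is a constant c (depending only on n and r) such that |f_{n,r}(N) − (n−r+1)·N^{n+1}/(n+1)!| ≤ c·N^n for all N ≥ 1. -/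
/-- `f_{n,r}(N) = Σ_{m=1}^N Σ_{ℓ=0}^{m−1} C(N−ℓ+n−r, n−r) · C(ℓ+r−1, r−1)`. -/
def fnr (n r N : ℕ) : ℕ :=
  ∑ m ∈ Finset.Icc 1 N, ∑ ℓ ∈ Finset.range m,
    (N - ℓ + n - r).choose (n - r) * (ℓ + r - 1).choose (r - 1)

section FnrAux
open Finset

/-- shifted hockey stick -/
lemma hs (p : ℕ) : ∀ M : ℕ, ∑ ℓ ∈ range (M+1), (ℓ+p).choose p = (M+p+1).choose (p+1)
  | 0 => by simp
  | (M+1) => by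
    rw [Finset.sum_range_succ, hs p M]
    have e0 : M+1+p+1 = (M+p+1)+1 := by ring
    have e1 : M+1+p = M+p+1 := by ring
    rw [e0, e1, Nat.choose_succ_succ (M+p+1) p]
    simp only [Nat.succ_eq_add_one]
    omega

/-- triangle rearrangement -/
lemma tri (f g : ℕ → ℕ) : ∀ M : ℕ,
    ∑ ℓ ∈ range (M+1), ∑ j ∈ range (M-ℓ+1), f j * g ℓ
      = ∑ K ∈ range (M+1), ∑ ℓ ∈ range (K+1), f (K-ℓ) * g ℓ
  | 0 => by simp
  | (M+1) => by
    have key : ∑ ℓ ∈ range (M+1+1), ∑ j ∈ range (M+1-ℓ+1), f j * g ℓ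
        = (∑ ℓ ∈ range (M+1), ∑ j ∈ range (M-ℓ+1), f j * g ℓ)
          + ∑ ℓ ∈ range (M+1+1), f (M+1-ℓ) * g ℓ := by
      rw [Finset.sum_range_succ (fun ℓ => ∑ j ∈ range (M+1-ℓ+1), f j * g ℓ),
          Finset.sum_range_succ (fun ℓ => f (M+1-ℓ) * g ℓ)]
      have h1 : ∀ ℓ ∈ range (M+1), ∑ j ∈ range (M+1-ℓ+1), f j * g ℓ
          = (∑ j ∈ range (M-ℓ+1), f j * g ℓ) + f (M+1-ℓ) * g ℓ := by
        intro ℓ hℓ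
        rw [Finset.mem_range] at hℓ
        have e : M+1-ℓ+1 = (M-ℓ+1)+1 := by omega
        have e2 : M+1-ℓ = M-ℓ+1 := by omega
        rw [e, Finset.sum_range_succ, e2]
      rw [Finset.sum_congr rfl h1, Finset.sum_add_distrib]
      have e3 : M+1-(M+1)+1 = 1 := by omega
      rw [e3, Finset.sum_range_one]
      have e4 : M+1-(M+1) = 0 := by omega
      rw [e4]
      ring
    rw [key, tri f g M]
    conv_rhs => rw [Finset.sum_range_succ]

/-- convolution identity -/
lemma conv : ∀ p q M : ℕ,
    ∑ ℓ ∈ range (M+1), (M-ℓ+p).choose p * (ℓ+q).choose q = (M+p+q+1).choose (p+q+1)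
  | 0, q, M => by
    simp only [Nat.add_zero, Nat.choose_zero_right, Nat.one_mul]
    have := hs q M
    rw [this]
    congr 1 <;> omega
  | (p+1), q, M => by
    have h1 : ∀ ℓ ∈ range (M+1), (M-ℓ+(p+1)).choose (p+1) * (ℓ+q).choose q
        = ∑ j ∈ range (M-ℓ+1), (j+p).choose p * (ℓ+q).choose q := by
      intro ℓ hℓ
      rw [← Finset.sum_mul]
      congr 1
      rw [hs p (M-ℓ), Nat.add_assoc]
    rw [Finset.sum_congr rfl h1, tri (fun j => (j+p).choose p) (fun ℓ => (ℓ+q).choose q) M]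
    have h2 : ∀ K ∈ range (M+1), ∑ ℓ ∈ range (K+1), (K-ℓ+p).choose p * (ℓ+q).choose q
        = (K+(p+q+1)).choose (p+q+1) := by
      intro K _
      rw [conv p q K]
      congr 1
      omega
    rw [Finset.sum_congr rfl h2, hs (p+q+1) M]
    congr 1 <;> omega

/-- swap double sum -/
lemma dsum (h : ℕ → ℕ) : ∀ N : ℕ,
    ∑ m ∈ Icc 1 N, ∑ ℓ ∈ range m, h ℓ = ∑ ℓ ∈ range N, (N-ℓ) * h ℓ
  | 0 => by simp
  | (N+1) => by
    rw [Finset.sum_Icc_succ_top (by omega : 1 ≤ N+1), dsum h N]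
    have h1 : ∀ ℓ ∈ range (N+1), (N+1-ℓ) * h ℓ = (N-ℓ) * h ℓ + h ℓ := by
      intro ℓ hℓ
      rw [Finset.mem_range] at hℓ
      have : N+1-ℓ = (N-ℓ)+1 := by omega
      rw [this, Nat.add_mul, Nat.one_mul]
    rw [Finset.sum_congr rfl h1, Finset.sum_add_distrib,
        Finset.sum_range_succ (fun ℓ => (N-ℓ) * h ℓ), Nat.sub_self, Nat.zero_mul]
    ring

/-- closed form -/
lemma fnr_closed (n r : ℕ) (hr : 0 < r) (hrn : r ≤ n) (N : ℕ) (hN : 1 ≤ N) :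
    fnr n r N = (n - r + 1) * (N + n).choose (n + 1) := by
  set a := n - r with ha
  set b := r - 1 with hb
  have e0 : ∀ m ∈ Icc 1 N, ∑ ℓ ∈ range m,
      (N - ℓ + n - r).choose (n - r) * (ℓ + r - 1).choose (r - 1)
      = ∑ ℓ ∈ range m, (N-ℓ+a).choose a * (ℓ+b).choose b := by
    intro m _
    apply Finset.sum_congr rfl
    intro ℓ _
    have e1 : N - ℓ + n - r = N - ℓ + a := by omega
    have e2 : ℓ + r - 1 = ℓ + b := by omega
    rw [e1, e2]
  have step1 : fnr n r N = ∑ ℓ ∈ range N, (N-ℓ) * ((N-ℓ+a).choose a * (ℓ+b).choose b) := by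
    rw [fnr, Finset.sum_congr rfl e0, dsum (fun ℓ => (N-ℓ+a).choose a * (ℓ+b).choose b) N]
  have step2 : ∀ ℓ ∈ range N, (N-ℓ) * ((N-ℓ+a).choose a * (ℓ+b).choose b)
      = (a+1) * ((N-ℓ+a).choose (a+1) * (ℓ+b).choose b) := by
    intro ℓ hℓ
    have hc := Nat.choose_succ_right_eq (N-ℓ+a) a
    rw [Nat.add_sub_cancel] at hc
    calc (N-ℓ) * ((N-ℓ+a).choose a * (ℓ+b).choose b)
        = ((N-ℓ+a).choose a * (N-ℓ)) * (ℓ+b).choose b := by ring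
      _ = ((N-ℓ+a).choose (a+1) * (a+1)) * (ℓ+b).choose b := by rw [hc]
      _ = (a+1) * ((N-ℓ+a).choose (a+1) * (ℓ+b).choose b) := by ring
  rw [step1, Finset.sum_congr rfl step2, ← Finset.mul_sum]
  obtain ⟨M, rfl⟩ : ∃ M, N = M+1 := ⟨N-1, by omega⟩
  have h3 : ∀ ℓ ∈ range (M+1), (M+1-ℓ+a).choose (a+1) * (ℓ+b).choose b
      = (M-ℓ+(a+1)).choose (a+1) * (ℓ+b).choose b := by
    intro ℓ hℓ
    rw [Finset.mem_range] at hℓ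
    have e3 : M+1-ℓ+a = M-ℓ+(a+1) := by omega
    rw [e3]
  rw [Finset.sum_congr rfl h3, conv (a+1) b M]
  have e4 : M + (a+1) + b + 1 = M + 1 + n := by omega
  have e5 : (a+1) + b + 1 = n + 1 := by omega
  rw [e4, e5]

/-- ascFactorial lower bound -/
lemma asc_lower (N : ℕ) : ∀ k : ℕ, N^k ≤ N.ascFactorial k
  | 0 => le_refl 1
  | (k+1) => by
    rw [Nat.ascFactorial_succ, pow_succ]
    calc N^k * N ≤ N.ascFactorial k * (N+k) := by
          exact Nat.mul_le_mul (asc_lower N k) (Nat.le_add_right N k)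
      _ = (N+k) * N.ascFactorial k := Nat.mul_comm _ _

/-- ascFactorial upper bound -/
lemma asc_upper (n N : ℕ) : ∀ k : ℕ, k ≤ n →
    N.ascFactorial (k+1) ≤ N^(k+1) + (k+1)*(n+1)*(N+n)^k
  | 0, _ => by
    rw [Nat.ascFactorial_succ, Nat.ascFactorial_zero]
    simp
  | (k+1), hk => by
    have ih := asc_upper n N k (by omega)
    rw [Nat.ascFactorial_succ]
    calc (N+(k+1)) * N.ascFactorial (k+1)
        ≤ (N+(k+1)) * (N^(k+1) + (k+1)*(n+1)*(N+n)^k) := Nat.mul_le_mul_left _ ih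
      _ = N^(k+2) + (k+1)*N^(k+1) + (k+1)*(n+1)*((N+n)^k*(N+(k+1))) := by ring
      _ ≤ N^(k+2) + (n+1)*(N+n)^(k+1) + (k+1)*(n+1)*((N+n)^k*(N+n)) := by
          apply Nat.add_le_add
          apply Nat.add_le_add_left
          · apply Nat.mul_le_mul (by omega : k+1 ≤ n+1)
            exact Nat.pow_le_pow_left (by omega) (k+1)
          · apply Nat.mul_le_mul_left
            apply Nat.mul_le_mul_left
            omega
      _ = N^(k+2) + (k+2)*(n+1)*(N+n)^(k+1) := by rw [← pow_succ]; ring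

/-- Lemma 9.2.5: for `0 < r ≤ n`,
`f_{n,r}(N) = (n−r+1) · N^{n+1}/(n+1)! + O(N^n)` as `N → ∞`; i.e., there is a
constant `c` (depending only on `n` and `r`) with
`|f_{n,r}(N) − (n−r+1) N^{n+1}/(n+1)!| ≤ c·N^n` for all `N ≥ 1`. -/
theorem fnr_asymptotic (n r : ℕ) (hr : 0 < r) (hrn : r ≤ n) :
    ∃ c : ℝ, ∀ N : ℕ, 1 ≤ N →
      |(fnr n r N : ℝ) - ((n : ℝ) - r + 1) * (N : ℝ) ^ (n + 1) / (n + 1).factorial|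
        ≤ c * (N : ℝ) ^ n := by
  refine ⟨(((n - r + 1) * ((n+1)*(n+1)*(n+1)^n) : ℕ) : ℝ), ?_⟩
  intro N hN
  have hclosed := fnr_closed n r hr hrn N hN
  have hasc := Nat.ascFactorial_eq_factorial_mul_choose (N-1) (n+1)
  have e1 : N - 1 + 1 = N := by omega
  have e2 : N - 1 + (n+1) = N + n := by omega
  rw [e1, e2] at hasc
  have hlow : N^(n+1) ≤ N.ascFactorial (n+1) := asc_lower N (n+1)
  have hup : N.ascFactorial (n+1) ≤ N^(n+1) + ((n+1)*(n+1)*(n+1)^n) * N^n := by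
    have h5 : n ≤ n * N := Nat.le_mul_of_pos_right n hN
    have h6 : N + n ≤ (n+1)*N := by
      have : (n+1)*N = N + n*N := by ring
      omega
    calc N.ascFactorial (n+1) ≤ N^(n+1) + (n+1)*(n+1)*(N+n)^n := asc_upper n N n le_rfl
      _ ≤ N^(n+1) + (n+1)*(n+1)*((n+1)*N)^n := by
          apply Nat.add_le_add_left
          exact Nat.mul_le_mul_left _ (Nat.pow_le_pow_left h6 n)
      _ = N^(n+1) + ((n+1)*(n+1)*(n+1)^n) * N^n := by rw [mul_pow]; ring
  -- move to the reals
  have hF : (1:ℝ) ≤ ((n+1).factorial : ℝ) := by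
    exact_mod_cast Nat.one_le_iff_ne_zero.mpr (n+1).factorial_ne_zero
  have hF0 : ((n+1).factorial : ℝ) ≠ 0 := by positivity
  have hcast : (n:ℝ) - r + 1 = ((n - r + 1 : ℕ) : ℝ) := by
    rw [Nat.cast_add, Nat.cast_sub hrn, Nat.cast_one]
  rw [hclosed, hcast]
  have hAF : ((N.ascFactorial (n+1) : ℕ) : ℝ)
      = ((n+1).factorial : ℝ) * ((N + n).choose (n + 1) : ℝ) := by exact_mod_cast hasc
  have hD0 : (0:ℝ) ≤ ((n - r + 1 : ℕ) : ℝ) := by positivity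
  have hlowR : (N:ℝ)^(n+1) ≤ ((N.ascFactorial (n+1) : ℕ) : ℝ) := by exact_mod_cast hlow
  have hupR : ((N.ascFactorial (n+1) : ℕ) : ℝ)
      ≤ (N:ℝ)^(n+1) + (((n+1)*(n+1)*(n+1)^n : ℕ) : ℝ) * (N:ℝ)^n := by exact_mod_cast hup
  have key : (((n - r + 1) * (N + n).choose (n + 1) : ℕ) : ℝ)
      - ((n - r + 1 : ℕ) : ℝ) * (N:ℝ)^(n+1) / ((n+1).factorial : ℝ)
      = ((n - r + 1 : ℕ) : ℝ) * (((N.ascFactorial (n+1) : ℕ) : ℝ) - (N:ℝ)^(n+1))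
          / ((n+1).factorial : ℝ) := by
    rw [Nat.cast_mul, hAF]
    field_simp
  rw [key, abs_of_nonneg (by
    apply div_nonneg _ (by positivity)
    apply mul_nonneg hD0
    linarith)]
  calc ((n - r + 1 : ℕ) : ℝ) * (((N.ascFactorial (n+1) : ℕ) : ℝ) - (N:ℝ)^(n+1))
          / ((n+1).factorial : ℝ)
      ≤ ((n - r + 1 : ℕ) : ℝ) * (((N.ascFactorial (n+1) : ℕ) : ℝ) - (N:ℝ)^(n+1)) := by
        apply div_le_self _ hF
        apply mul_nonneg hD0
        linarith
    _ ≤ ((n - r + 1 : ℕ) : ℝ) * ((((n+1)*(n+1)*(n+1)^n : ℕ) : ℝ) * (N:ℝ)^n) := by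
        apply mul_le_mul_of_nonneg_left _ hD0
        linarith
    _ = (((n - r + 1) * ((n+1)*(n+1)*(n+1)^n) : ℕ) : ℝ) * (N:ℝ)^n := by
        push_cast
        ring

end FnrAux
end

section
/- Let n > r ≥ 1 be integers and for all N ∈ ℕ let f_{n,r}(N) = Σ_{m=1}^N Σ_{ℓ=0}^{m−1} C(N−ℓ+n−r, n−r)·C(ℓ+r−1, r−1). Then for every integer N ≥ 1, f_{n,r}(N) − f_{n,r}(N−1) = f_{n−1,r}(N) + C(N−1+n, n). -/
open Finset
/-- Vandermonde-type convolution: `∑_{ℓ=0}^M C(M-ℓ+a, a) C(ℓ+t, t) = C(M+a+t+1, a+t+1)`. -/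
lemma vand (a t : ℕ) : ∀ M : ℕ, ∑ ℓ ∈ range (M+1), (M - ℓ + a).choose a * (ℓ + t).choose t
    = (M + a + t + 1).choose (a + t + 1) := by
  induction a with
  | zero =>
    intro M
    simp only [Nat.add_zero, Nat.choose_zero_right, one_mul, zero_add]
    have := Nat.sum_range_add_choose M t
    simpa using this
  | succ a iha =>
    intro M
    induction M with
    | zero => simp
    | succ M ihm =>
      rw [Finset.sum_range_succ]
      have hstep : ∀ ℓ ∈ range (M+1),
          (M + 1 - ℓ + (a+1)).choose (a+1) * (ℓ + t).choose t
            = (M - ℓ + (a+1)).choose (a+1) * (ℓ + t).choose t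
              + (M + 1 - ℓ + a).choose a * (ℓ + t).choose t := by
        intro ℓ hℓ
        have hℓM : ℓ ≤ M := by simpa using Nat.lt_succ_iff.mp (Finset.mem_range.mp hℓ)
        have h1 : M + 1 - ℓ + (a+1) = (M - ℓ + (a+1)) + 1 := by omega
        rw [h1, Nat.choose_succ_succ, add_mul, add_comm]
        have h2 : M - ℓ + (a + 1) = M + 1 - ℓ + a := by omega
        rw [h2]
      rw [Finset.sum_congr rfl hstep, Finset.sum_add_distrib, ihm]
      have hlast := iha (M+1)
      rw [Finset.sum_range_succ] at hlast
      have h3 : (M + 1 - (M + 1) + (a + 1)).choose (a + 1) * (M + 1 + t).choose t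
          = (M + 1 - (M + 1) + a).choose a * (M + 1 + t).choose t := by
        simp
      rw [h3, add_assoc, hlast]
      have h4 : M + 1 + (a + 1) + t + 1 = (M + 1 + a + t + 1) + 1 := by omega
      have h5 : a + 1 + t + 1 = (a + t + 1) + 1 := by omega
      rw [h4, h5, Nat.choose_succ_succ (M + 1 + a + t + 1) (a + t + 1)]
      have h6 : M + (a + 1) + t + 1 = M + 1 + a + t + 1 := by omega
      rw [h6]
      exact add_comm _ _

lemma vand' (s t M : ℕ) :
    ∑ ℓ ∈ range (M+1), (M - ℓ + s + 1).choose (s+1) * (ℓ + t).choose t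
      = (M + (t + s + 2)).choose (t + s + 2) := by
  have h := vand (s+1) t M
  have h1 : ∀ ℓ ∈ range (M+1), (M - ℓ + (s+1)).choose (s+1) * (ℓ + t).choose t
      = (M - ℓ + s + 1).choose (s+1) * (ℓ + t).choose t := by
    intro ℓ _
    congr 2 <;> omega
  rw [Finset.sum_congr rfl h1] at h
  rw [h]
  congr 1 <;> omega

lemma main_nat (s t M : ℕ) :
    fnr (t+s+2) (t+1) (M+1)
      = fnr (t+s+2) (t+1) M + fnr (t+s+1) (t+1) (M+1) + (M + (t+s+2)).choose (t+s+2) := by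
  have e1 : fnr (t+s+2) (t+1) (M+1)
      = ∑ m ∈ Icc 1 (M+1), ∑ ℓ ∈ range m, (M + 1 - ℓ + s + 1).choose (s+1) * (ℓ + t).choose t := by
    unfold fnr
    refine Finset.sum_congr rfl fun m hm => Finset.sum_congr rfl fun ℓ hℓ => ?_
    congr 2 <;> omega
  have e2 : fnr (t+s+2) (t+1) M
      = ∑ m ∈ Icc 1 M, ∑ ℓ ∈ range m, (M - ℓ + s + 1).choose (s+1) * (ℓ + t).choose t := by
    unfold fnr
    refine Finset.sum_congr rfl fun m hm => Finset.sum_congr rfl fun ℓ hℓ => ?_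
    congr 2 <;> omega
  have e3 : fnr (t+s+1) (t+1) (M+1)
      = ∑ m ∈ Icc 1 (M+1), ∑ ℓ ∈ range m, (M + 1 - ℓ + s).choose s * (ℓ + t).choose t := by
    unfold fnr
    refine Finset.sum_congr rfl fun m hm => Finset.sum_congr rfl fun ℓ hℓ => ?_
    congr 2 <;> omega
  rw [e1, e2, e3]
  -- Pascal on each term
  have hterm : ∀ m ∈ Icc 1 (M+1), (∑ ℓ ∈ range m, (M + 1 - ℓ + s + 1).choose (s+1) * (ℓ + t).choose t)
      = (∑ ℓ ∈ range m, (M - ℓ + s + 1).choose (s+1) * (ℓ + t).choose t)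
        + ∑ ℓ ∈ range m, (M + 1 - ℓ + s).choose s * (ℓ + t).choose t := by
    intro m hm
    rw [← Finset.sum_add_distrib]
    refine Finset.sum_congr rfl fun ℓ hℓ => ?_
    have hmM : m ≤ M + 1 := (Finset.mem_Icc.mp hm).2
    have hℓM : ℓ ≤ M := by have := Finset.mem_range.mp hℓ; omega
    have h1 : M + 1 - ℓ + s + 1 = (M - ℓ + s + 1) + 1 := by omega
    rw [h1, Nat.choose_succ_succ, add_mul, add_comm]
    have h2 : M - ℓ + s + 1 = M + 1 - ℓ + s := by omega
    rw [h2]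
  rw [Finset.sum_congr rfl hterm, Finset.sum_add_distrib]
  have hsplit : (∑ m ∈ Icc 1 (M+1), ∑ ℓ ∈ range m, (M - ℓ + s + 1).choose (s+1) * (ℓ + t).choose t)
      = (∑ m ∈ Icc 1 M, ∑ ℓ ∈ range m, (M - ℓ + s + 1).choose (s+1) * (ℓ + t).choose t)
        + ∑ ℓ ∈ range (M+1), (M - ℓ + s + 1).choose (s+1) * (ℓ + t).choose t :=
    Finset.sum_Icc_succ_top (by omega) _
  rw [hsplit, vand' s t M]
  ring

/-- The recurrence in the proof of Lemma 9.2.5: for `n > r ≥ 1` and `N ≥ 1`,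
`f_{n,r}(N) − f_{n,r}(N−1) = f_{n−1,r}(N) + C(N−1+n, n)`. -/
theorem fnr_recurrence (n r : ℕ) (hr : 1 ≤ r) (hrn : r < n) (N : ℕ) (hN : 1 ≤ N) :
    (fnr n r N : ℤ) - (fnr n r (N - 1) : ℤ)
      = (fnr (n - 1) r N : ℤ) + ((N - 1 + n).choose n : ℤ) := by
  obtain ⟨t, rfl⟩ : ∃ t, r = t + 1 := ⟨r - 1, by omega⟩
  obtain ⟨s, rfl⟩ : ∃ s, n = t + s + 2 := ⟨n - t - 2, by omega⟩
  obtain ⟨M, rfl⟩ : ∃ M, N = M + 1 := ⟨N - 1, by omega⟩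
  have h1 : M + 1 - 1 = M := by omega
  have h2 : t + s + 2 - 1 = t + s + 1 := by omega
  rw [h1, h2]
  have h := main_nat s t M
  zify at h
  linarith
end

section
/- Let 0 < r ≤ n be integers. For N, m ∈ ℕ, let a(N,m) denote the number of tuples (j₀, j₁, …, j_n) ∈ ℕ^{n+1} with j₀ + j₁ + ⋯ + j_n = N and j₁ + ⋯ + j_r ≥ m. Then lim_{N → ∞} (Σ_{m=1}^N a(N,m)) / (N·C(N+n, n)) = r/(n+1). (This computes β(𝒪(1), Y) = r/(n+1) for the codimension-r linear subspace Y : x₁ = ⋯ = x_r = 0 of ℙ^n, since a(N,m) = h⁰(ℙ^n, 𝒪(N) ⊗ ℐ_Y^m).) -/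
open Filter Finset

variable (n r N : ℕ)

private def Idx (n r : ℕ) : Finset (Fin (n+1)) :=
  Finset.univ.filter (fun i : Fin (n + 1) => 1 ≤ (i : ℕ) ∧ (i : ℕ) ≤ r)

private def Tsum (n r : ℕ) (j : Fin (n+1) → ℕ) : ℕ := ∑ i ∈ Idx n r, j i

private lemma aCount_eq (m : ℕ) :
    Nat.card {j : Fin (n + 1) → ℕ // (∑ i, j i) = N ∧ m ≤ Tsum n r j}
      = ((Finset.Nat.antidiagonalTuple (n+1) N).filter (fun j => m ≤ Tsum n r j)).card := by
  rw [← Nat.card_eq_finsetCard]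
  exact Nat.card_congr (Equiv.subtypeEquivRight (by
    intro j
    simp [Finset.Nat.mem_antidiagonalTuple]))

private lemma card_F : (Finset.Nat.antidiagonalTuple (n+1) N).card = (N + n).choose n := by
  rw [← Nat.card_eq_finsetCard]
  have e1 : {j // j ∈ Finset.Nat.antidiagonalTuple (n+1) N} ≃ {j : Fin (n+1) → ℕ // ∑ i, j i = N} :=
    Equiv.subtypeEquivRight (by intro j; simp [Finset.Nat.mem_antidiagonalTuple])
  rw [Nat.card_congr (e1.trans (Sym.equivNatSumOfFintype (Fin (n+1)) N).symm)]
  rw [Nat.card_eq_fintype_card, Sym.card_sym_eq_choose]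
  simp [Fintype.card_fin]
  rw [Nat.add_comm n N]
  
  rw [← Nat.choose_symm (by omega : N ≤ N + n)]; congr 1; omega

private lemma sum_coord (i : Fin (n+1)) :
    ∑ j ∈ Finset.Nat.antidiagonalTuple (n+1) N, j i
      = ∑ j ∈ Finset.Nat.antidiagonalTuple (n+1) N, j 0 := by
  apply Finset.sum_nbij' (fun j => j ∘ Equiv.swap 0 i) (fun j => j ∘ Equiv.swap 0 i)
  · intro j hj
    simp only [Finset.Nat.mem_antidiagonalTuple] at *
    rw [← hj]
    exact Equiv.sum_comp (Equiv.swap 0 i) j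
  · intro j hj
    simp only [Finset.Nat.mem_antidiagonalTuple] at *
    rw [← hj]
    exact Equiv.sum_comp (Equiv.swap 0 i) j
  · intro j hj; funext k; simp [Function.comp]
  · intro j hj; funext k; simp [Function.comp]
  · intro j hj
    simp [Function.comp, Equiv.swap_apply_right]

private lemma card_Idx (hrn : r ≤ n) : (Idx n r).card = r := by
  have : (Idx n r).card = (Finset.Icc 1 r).card := by
    refine Finset.card_bij (fun i _ => (i : ℕ)) ?_ ?_ ?_
    · intro i hi
      simp only [Idx, Finset.mem_filter] at hi
      simp [Finset.mem_Icc, hi.2.1, hi.2.2]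
    · intro a ha b hb h; exact Fin.val_injective h
    · intro m hm
      simp only [Finset.mem_Icc] at hm
      exact ⟨⟨m, by omega⟩, by simp [Idx]; omega, rfl⟩
  rw [this, Nat.card_Icc]; omega

private lemma Tsum_le (j : Fin (n+1) → ℕ) (hj : ∑ i, j i = N) : Tsum n r j ≤ N := by
  rw [← hj]
  exact Finset.sum_le_sum_of_subset (Finset.subset_univ _)

private lemma key (hrn : r ≤ n) :
    (n + 1) * (∑ m ∈ Finset.Icc 1 N, ((Finset.Nat.antidiagonalTuple (n+1) N).filter
        (fun j => m ≤ Tsum n r j)).card)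
      = r * (N * (N + n).choose n) := by
  set F := Finset.Nat.antidiagonalTuple (n+1) N with hF
  have h1 : ∑ m ∈ Finset.Icc 1 N, (F.filter (fun j => m ≤ Tsum n r j)).card
      = ∑ j ∈ F, Tsum n r j := by
    have : ∀ m, (F.filter (fun j => m ≤ Tsum n r j)).card
        = ∑ j ∈ F, if m ≤ Tsum n r j then 1 else 0 := by
      intro m; rw [← Finset.sum_filter]; simp
    simp_rw [this]
    rw [Finset.sum_comm]
    refine Finset.sum_congr rfl (fun j hj => ?_)
    have hTle : Tsum n r j ≤ N := Tsum_le n r N j (Finset.Nat.mem_antidiagonalTuple.mp hj)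
    rw [← Finset.sum_filter]
    have : (Finset.Icc 1 N).filter (fun m => m ≤ Tsum n r j) = Finset.Icc 1 (Tsum n r j) := by
      ext m; simp only [Finset.mem_filter, Finset.mem_Icc]; omega
    rw [this]
    simp [Nat.card_Icc]
  have h2 : ∑ j ∈ F, Tsum n r j = r * ∑ j ∈ F, j 0 := by
    unfold Tsum
    rw [Finset.sum_comm]
    have : ∀ i ∈ Idx n r, ∑ j ∈ F, j i = ∑ j ∈ F, j 0 := fun i _ => sum_coord n N i
    rw [Finset.sum_congr rfl this, Finset.sum_const, card_Idx n r hrn, smul_eq_mul]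
  have h3 : (n + 1) * ∑ j ∈ F, j 0 = N * (N + n).choose n := by
    have : ∀ i : Fin (n+1), ∑ j ∈ F, j i = ∑ j ∈ F, j 0 := fun i => sum_coord n N i
    calc (n + 1) * ∑ j ∈ F, j 0 = ∑ _i : Fin (n+1), ∑ j ∈ F, j 0 := by
          rw [Finset.sum_const, Finset.card_univ, Fintype.card_fin, smul_eq_mul]
      _ = ∑ i : Fin (n+1), ∑ j ∈ F, j i := by
          exact (Finset.sum_congr rfl (fun i _ => (this i).symm))
      _ = ∑ j ∈ F, ∑ i : Fin (n+1), j i := Finset.sum_comm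
      _ = ∑ j ∈ F, N := Finset.sum_congr rfl (fun j hj => Finset.Nat.mem_antidiagonalTuple.mp hj)
      _ = N * (N + n).choose n := by rw [Finset.sum_const, smul_eq_mul, card_F, Nat.mul_comm]
  rw [h1, h2, ← Nat.mul_assoc, Nat.mul_comm (n+1) r, Nat.mul_assoc, h3]

/-- `a(N,m)`: the number of tuples `(j₀, …, j_n) ∈ ℕ^{n+1}` with
`j₀ + ⋯ + j_n = N` and `j₁ + ⋯ + j_r ≥ m`; this is
`h⁰(ℙ^n, 𝒪(N) ⊗ ℐ_Y^m)` for the linear subspace `Y : x₁ = ⋯ = x_r = 0`. -/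
noncomputable def aCount (n r N m : ℕ) : ℕ :=
  Nat.card {j : Fin (n + 1) → ℕ // (∑ i, j i) = N ∧
    m ≤ ∑ i ∈ Finset.univ.filter
      (fun i : Fin (n + 1) => 1 ≤ (i : ℕ) ∧ (i : ℕ) ≤ r), j i}

/-- Proposition 9.2: for `0 < r ≤ n`,
`lim_{N→∞} (Σ_{m=1}^N a(N,m)) / (N · C(N+n, n)) = r/(n+1)`; that is,
`β(𝒪(1), Y) = r/(n+1)` for a codimension-`r` linear subspace `Y ⊆ ℙ^n`. -/
theorem beta_linear_subspace (n r : ℕ) (hr : 0 < r) (hrn : r ≤ n) :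
    Tendsto
      (fun N : ℕ =>
        (∑ m ∈ Finset.Icc 1 N, (aCount n r N m : ℝ)) /
          ((N : ℝ) * ((N + n).choose n : ℝ)))
      atTop (nhds ((r : ℝ) / ((n : ℝ) + 1))) := by
  apply Tendsto.congr' _ tendsto_const_nhds
  filter_upwards [eventually_ge_atTop 1] with N hN
  have hkey := key n r N hrn
  have hc : ∀ m, aCount n r N m = ((Finset.Nat.antidiagonalTuple (n+1) N).filter
      (fun j => m ≤ Tsum n r j)).card := fun m => aCount_eq n r N m
  have hsum : (∑ m ∈ Finset.Icc 1 N, (aCount n r N m : ℝ))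
      = ((∑ m ∈ Finset.Icc 1 N, aCount n r N m : ℕ) : ℝ) := by push_cast; rfl
  have hkey' : (n + 1) * (∑ m ∈ Finset.Icc 1 N, aCount n r N m)
      = r * (N * (N + n).choose n) := by
    simp_rw [hc]; exact hkey
  have hC : 0 < (N + n).choose n := Nat.choose_pos (by omega)
  have hkeyR : ((n:ℝ) + 1) * (∑ m ∈ Finset.Icc 1 N, (aCount n r N m : ℝ))
      = (r : ℝ) * ((N : ℝ) * ((N + n).choose n : ℝ)) := by
    rw [hsum]
    exact_mod_cast congrArg (Nat.cast (R := ℝ)) hkey'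
  have hNC : (N : ℝ) * ((N + n).choose n : ℝ) ≠ 0 := by
    have : (0:ℝ) < (N : ℝ) * ((N + n).choose n : ℝ) := by positivity
    exact this.ne'
  rw [div_eq_div_iff (by positivity : ((n:ℝ)+1) ≠ 0) hNC]
  linarith [hkeyR]
end
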